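/- (Bernstein's inequality) If X₁,…,Xₙ are independent real random variables, each with mean 0 and each bounded in absolute value by 1, and S = X₁ + ⋯ + Xₙ, then for any x > 0, P(S ≥ x) ≤ exp(−x²/(2(𝔼[S²] + x))). -/

import Mathlib

open MeasureTheory ProbabilityTheory

private lemma exp_tsum' (u : ℝ) : Real.exp u = ∑' n : ℕ, u ^ n / n.factorial := by
  rw [Real.exp_eq_exp_ℝ, NormedSpace.exp_eq_tsum_div]

private lemma exp_sub_tail (u : ℝ) :
    Real.exp u - 1 - u = ∑' n : ℕ, u ^ (n + 2) / (n + 2).factorial := by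
  have hs := Real.summable_pow_div_factorial u
  have h := Summable.sum_add_tsum_nat_add (f := fun n : ℕ => u ^ n / n.factorial) 2 hs
  rw [exp_tsum' u, ← h]
  simp only [Finset.sum_range_succ, Finset.sum_range_zero]
  norm_num [Nat.factorial]
  ring

private lemma tail_summable (u : ℝ) :
    Summable (fun n : ℕ => u ^ (n + 2) / ((n + 2).factorial : ℝ)) :=
  (summable_nat_add_iff 2).2 (Real.summable_pow_div_factorial u)

private lemma key_pointwise {t y : ℝ} (ht : 0 ≤ t) (hy : |y| ≤ 1) :
    Real.exp (t * y) ≤ 1 + t * y + y ^ 2 * (Real.exp t - 1 - t) := by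
  have h1 := exp_sub_tail (t * y)
  have h2 := exp_sub_tail t
  have hsum1 := tail_summable (t * y)
  have hsum2 : Summable (fun n : ℕ => y ^ 2 * (t ^ (n + 2) / ((n + 2).factorial : ℝ))) :=
    (tail_summable t).mul_left _
  have hterm : ∀ n : ℕ, (t * y) ^ (n + 2) / ((n + 2).factorial : ℝ) ≤
      y ^ 2 * (t ^ (n + 2) / ((n + 2).factorial : ℝ)) := by
    intro n
    have hfac : (0 : ℝ) < (n + 2).factorial := by positivity
    have hy2 : |y| ^ (n + 2) ≤ y ^ 2 := by
      calc |y| ^ (n + 2) ≤ |y| ^ 2 :=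
            pow_le_pow_of_le_one (abs_nonneg y) hy (by omega)
        _ = y ^ 2 := sq_abs y
    have h3 : (t * y) ^ (n + 2) ≤ y ^ 2 * t ^ (n + 2) := by
      calc (t * y) ^ (n + 2) ≤ |(t * y) ^ (n + 2)| := le_abs_self _
        _ = |y| ^ (n + 2) * t ^ (n + 2) := by
            rw [abs_pow, abs_mul, abs_of_nonneg ht, mul_pow]; ring
        _ ≤ y ^ 2 * t ^ (n + 2) := by
            have : (0:ℝ) ≤ t ^ (n + 2) := by positivity
            exact mul_le_mul_of_nonneg_right hy2 this
    rw [← mul_div_assoc]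
    exact div_le_div_of_nonneg_right h3 hfac.le
  have := Summable.tsum_le_tsum hterm hsum1 hsum2
  rw [← h1, tsum_mul_left, ← h2] at this
  linarith

private lemma tail_le_of_lt_one {t : ℝ} (ht : 0 ≤ t) (ht1 : t < 1) :
    Real.exp t - 1 - t ≤ t ^ 2 / (2 * (1 - t)) := by
  rw [exp_sub_tail]
  have hgeo : Summable (fun n : ℕ => t ^ 2 / 2 * t ^ n) :=
    (summable_geometric_of_lt_one ht ht1).mul_left _
  have hterm : ∀ n : ℕ, t ^ (n + 2) / ((n + 2).factorial : ℝ) ≤ t ^ 2 / 2 * t ^ n := by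
    intro n
    have h2f : (2 : ℝ) ≤ (n + 2).factorial := by
      have : (n + 2) ≤ (n + 2).factorial := Nat.self_le_factorial _
      have : (2 : ℕ) ≤ (n + 2).factorial := le_trans (by omega) this
      exact_mod_cast this
    have hnum : (0 : ℝ) ≤ t ^ (n + 2) := by positivity
    calc t ^ (n + 2) / ((n + 2).factorial : ℝ) ≤ t ^ (n + 2) / 2 :=
          div_le_div_of_nonneg_left hnum (by norm_num) h2f
      _ = t ^ 2 / 2 * t ^ n := by rw [pow_add]; ring
  calc ∑' n : ℕ, t ^ (n + 2) / ((n + 2).factorial : ℝ)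
      ≤ ∑' n : ℕ, t ^ 2 / 2 * t ^ n := Summable.tsum_le_tsum hterm (tail_summable t) hgeo
    _ = t ^ 2 / 2 * (1 - t)⁻¹ := by
        rw [tsum_mul_left, tsum_geometric_of_lt_one ht ht1]
    _ = t ^ 2 / (2 * (1 - t)) := by
        have h1t : (1:ℝ) - t ≠ 0 := by linarith
        field_simp

theorem bernstein_inequality {Ω : Type*} [MeasurableSpace Ω] (P : Measure Ω)
    [IsProbabilityMeasure P] {n : ℕ}
    (X : Fin n → Ω → ℝ) (hXmeas : ∀ i, Measurable (X i))
    (hindep : iIndepFun X P)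
    (hmean : ∀ i, ∫ ω, X i ω ∂P = 0)
    (hbdd : ∀ i, ∀ᵐ ω ∂P, |X i ω| ≤ 1)
    (x : ℝ) (hx : 0 < x) :
    P {ω | x ≤ ∑ i, X i ω} ≤
      ENNReal.ofReal
        (Real.exp (-x ^ 2 / (2 * ((∫ ω, (∑ i, X i ω) ^ 2 ∂P) + x)))) := by
  classical
  set S : Ω → ℝ := ∑ i, X i with hS
  have hSapp : ∀ ω, S ω = ∑ i, X i ω := fun ω => by simp [hS]
  -- basic facts
  have hmemtop : ∀ i, MemLp (X i) ⊤ P := fun i =>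
    memLp_top_of_bound (hXmeas i).aestronglyMeasurable 1
      ((hbdd i).mono fun ω h => by simpa using h)
  have hmem2 : ∀ i, MemLp (X i) 2 P := fun i =>
    (hmemtop i).mono_exponent le_top
  have hint : ∀ i, Integrable (X i) P := fun i =>
    ((hmemtop i).mono_exponent le_top).integrable le_rfl
  have hintsq : ∀ i, Integrable (fun ω => X i ω ^ 2) P := fun i => by
    simpa [Pi.pow_apply] using (hmem2 i).integrable_sq
  -- V = E[S^2] = ∑ σᵢ²
  set V : ℝ := ∫ ω, S ω ^ 2 ∂P with hV
  have hVnonneg : 0 ≤ V := integral_nonneg fun ω => sq_nonneg _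
  have hSmem2 : MemLp S 2 P := memLp_finset_sum' _ fun i _ => hmem2 i
  have hSmean : ∫ ω, S ω ∂P = 0 := by
    have : Integrable S P := integrable_finset_sum' _ fun i _ => hint i
    rw [hS]
    simp only [Finset.sum_apply]
    rw [integral_finset_sum _ fun i _ => hint i]
    simp [hmean]
  have hVsum : V = ∑ i, ∫ ω, X i ω ^ 2 ∂P := by
    have hvar : variance S P = ∑ i, variance (X i) P := by
      rw [hS]
      exact IndepFun.variance_sum (fun i _ => hmem2 i)
        (fun i _ j _ hij => hindep.indepFun hij)
    have h1 : variance S P = V - 0 ^ 2 := by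
      rw [variance_eq_sub hSmem2, hSmean, hV]
      congr 1
    have h2 : ∀ i, variance (X i) P = ∫ ω, X i ω ^ 2 ∂P := by
      intro i
      rw [variance_eq_sub (hmem2 i), hmean i]
      simp
    simp only [h2] at hvar
    rw [← hvar, h1]; ring
  set t : ℝ := x / (V + x) with htdef
  have hVx : 0 < V + x := by linarith
  have ht0 : 0 < t := div_pos hx hVx
  have ht1 : t ≤ 1 := by
    rw [div_le_one hVx]; linarith
  set c : ℝ := Real.exp t - 1 - t with hc
  have hcnonneg : 0 ≤ c := by
    have := Real.add_one_le_exp t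
    simp only [hc]; linarith
  -- integrability of exp(t * X i)
  have hintexp : ∀ i, Integrable (fun ω => Real.exp (t * X i ω)) P := by
    intro i
    refine Integrable.mono' (integrable_const (Real.exp t)) ?_ ?_
    · exact (Real.measurable_exp.comp ((measurable_const.mul (hXmeas i)))).aestronglyMeasurable
    · filter_upwards [hbdd i] with ω hω
      rw [Real.norm_eq_abs, abs_of_pos (Real.exp_pos _), Real.exp_le_exp]
      have : t * X i ω ≤ t * |X i ω| := by
        nlinarith [le_abs_self (X i ω)]
      nlinarith
  -- mgf bound per coordinate
  have hmgf_i : ∀ i, mgf (X i) P t ≤ Real.exp (c * ∫ ω, X i ω ^ 2 ∂P) := by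
    intro i
    have hpt : ∀ᵐ ω ∂P, Real.exp (t * X i ω) ≤ 1 + t * X i ω + X i ω ^ 2 * c := by
      filter_upwards [hbdd i] with ω hω
      exact key_pointwise ht0.le hω
    have i1 : Integrable (fun ω => 1 + t * X i ω) P := by
      exact (integrable_const 1).add ((hint i).const_mul t)
    have hrhs : Integrable (fun ω => 1 + t * X i ω + X i ω ^ 2 * c) P := by
      exact i1.add ((hintsq i).mul_const c)
    have h1 : mgf (X i) P t ≤ ∫ ω, (1 + t * X i ω + X i ω ^ 2 * c) ∂P :=
      integral_mono_ae (hintexp i) hrhs hpt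
    have h2 : ∫ ω, (1 + t * X i ω + X i ω ^ 2 * c) ∂P
        = 1 + c * ∫ ω, X i ω ^ 2 ∂P := by
      rw [integral_add i1 ((hintsq i).mul_const c),
        integral_add (integrable_const 1) ((hint i).const_mul t),
        integral_const, integral_const_mul, integral_mul_const, hmean i]
      simp [mul_comm]
    have h3 : 1 + c * ∫ ω, X i ω ^ 2 ∂P ≤ Real.exp (c * ∫ ω, X i ω ^ 2 ∂P) := by
      have := Real.add_one_le_exp (c * ∫ ω, X i ω ^ 2 ∂P)
      linarith
    calc mgf (X i) P t ≤ _ := h1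
      _ = _ := h2
      _ ≤ _ := h3
  -- mgf of sum
  have hmgfS : mgf S P t ≤ Real.exp (c * V) := by
    rw [hS, hindep.mgf_sum hXmeas]
    calc ∏ i, mgf (X i) P t ≤ ∏ i, Real.exp (c * ∫ ω, X i ω ^ 2 ∂P) :=
          Finset.prod_le_prod (fun i _ => mgf_nonneg) (fun i _ => hmgf_i i)
      _ = Real.exp (∑ i, c * ∫ ω, X i ω ^ 2 ∂P) := by
          rw [Real.exp_sum]
      _ = Real.exp (c * V) := by rw [← Finset.mul_sum, ← hVsum]
  -- Chernoff
  have hmeasS : Measurable S := by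
    have hfe : S = fun ω => ∑ i, X i ω := funext hSapp
    rw [hfe]
    exact Finset.measurable_sum _ fun i _ => hXmeas i
  have hintexpS : Integrable (fun ω => Real.exp (t * S ω)) P := by
    refine Integrable.mono' (integrable_const (Real.exp (t * n))) ?_ ?_
    · exact (Real.measurable_exp.comp (hmeasS.const_mul t)).aestronglyMeasurable
    · have hball : ∀ᵐ ω ∂P, ∀ i, |X i ω| ≤ 1 :=
        (MeasureTheory.ae_all_iff).2 hbdd
      filter_upwards [hball] with ω hω
      rw [Real.norm_eq_abs, abs_of_pos (Real.exp_pos _), Real.exp_le_exp]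
      have hs : S ω ≤ n := by
        rw [hSapp]
        calc ∑ i, X i ω ≤ ∑ _i : Fin n, (1 : ℝ) :=
              Finset.sum_le_sum fun i _ => le_trans (le_abs_self _) (hω i)
          _ = n := by simp
      nlinarith
  have hchernoff := measure_ge_le_exp_mul_mgf (X := S) (μ := P) (t := t) x ht0.le hintexpS
  -- combine
  have hsetEq : {ω | x ≤ ∑ i, X i ω} = {ω | x ≤ S ω} := by
    ext ω; simp [hSapp]
  rw [hsetEq]
  have hexp_nonneg : (0:ℝ) ≤ Real.exp (-x ^ 2 / (2 * (V + x))) := (Real.exp_pos _).le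
  rw [show (∫ ω, (∑ i, X i ω) ^ 2 ∂P) = V by rw [hV]; congr 1; funext ω; rw [hSapp]]
  rw [ENNReal.le_ofReal_iff_toReal_le (measure_ne_top _ _) hexp_nonneg]
  refine le_trans hchernoff ?_
  -- scalar inequality
  have hkey : Real.exp (-t * x) * mgf S P t ≤ Real.exp (-x ^ 2 / (2 * (V + x))) := by
    calc Real.exp (-t * x) * mgf S P t ≤ Real.exp (-t * x) * Real.exp (c * V) := by
          exact mul_le_mul_of_nonneg_left hmgfS (Real.exp_pos _).le
      _ = Real.exp (-t * x + c * V) := by rw [← Real.exp_add]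
      _ ≤ Real.exp (-x ^ 2 / (2 * (V + x))) := by
          rw [Real.exp_le_exp]
          rcases eq_or_lt_of_le hVnonneg with hV0 | hVpos
          · -- V = 0, t = 1
            have hVz : V = 0 := hV0.symm
            have ht : t = 1 := by rw [htdef, hVz, zero_add, div_self hx.ne']
            have hlhs : -t * x + c * V = -x := by rw [hVz, ht]; ring
            have hrhs' : -x ^ 2 / (2 * (V + x)) = -x / 2 := by
              rw [hVz, zero_add]
              field_simp
            rw [hlhs, hrhs']
            linarith
          · -- V > 0, t < 1
            have ht1' : t < 1 := by
              rw [htdef, div_lt_one hVx]; linarith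
            have hcb : c ≤ t ^ 2 / (2 * (1 - t)) := tail_le_of_lt_one ht0.le ht1'
            have h1t : 1 - t = V / (V + x) := by
              rw [htdef]; field_simp; ring
            have hcv : c * V ≤ t ^ 2 / (2 * (1 - t)) * V :=
              mul_le_mul_of_nonneg_right hcb hVnonneg
            have heq : -t * x + t ^ 2 / (2 * (1 - t)) * V = -x ^ 2 / (2 * (V + x)) := by
              rw [h1t, htdef]
              field_simp
              ring
            linarith
  exact hkey
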